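/- Let k be a finite field of q elements, A = k[T], φ the Carlitz module, and 𝔭 ⊂ A a maximal ideal of degree d generated by the monic irreducible P. Then the polynomial φ_P(x)/x has degree q^d − 1 and is an Eisenstein polynomial at 𝔭 up to the leading coefficient; in particular its constant term equals P (the reduction of each non-leading coefficient lies in 𝔭, and the constant term of φ_P(x)/x is P). -/

import Mathlib

open Polynomial

section Helpers

lemma coeff_one_comp {R : Type*} [CommRing R] (f g : R[X]) (hg : g.coeff 0 = 0) :
    (f.comp g).coeff 1 = f.coeff 1 * g.coeff 1 := by
  have h1 : ∀ h : R[X], h.coeff 1 = h.derivative.coeff 0 := by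
    intro h; rw [coeff_derivative]; ring_nf
  rw [h1, derivative_comp, mul_coeff_zero, coeff_zero_eq_eval_zero ((derivative f).comp g),
    eval_comp, ← coeff_zero_eq_eval_zero, hg, ← coeff_zero_eq_eval_zero, ← h1, ← h1, mul_comm]

lemma coeff_pow_char_pow {R : Type*} [CommRing R] (p : ℕ) [hp : Fact p.Prime] [CharP R p]
    (f : R[X]) (e m : ℕ) :
    (f ^ p ^ e).coeff m = if p ^ e ∣ m then (f.coeff (m / p ^ e)) ^ p ^ e else 0 := by
  rw [← map_iterateFrobenius_expand, coeff_map, coeff_expand (pow_pos hp.out.pos e)]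
  split
  · rw [iterateFrobenius_def]
  · exact map_zero _

/-- A polynomial supported on exponents that are powers of `q`. -/
def QSupp {R : Type*} [CommRing R] (q : ℕ) (f : R[X]) : Prop :=
  ∀ n, f.coeff n ≠ 0 → ∃ i, n = q ^ i

section S
variable {R : Type*} [CommRing R] (p : ℕ) [hp : Fact p.Prime] [CharP R p] (e : ℕ) {q : ℕ}
  (hq : q = p ^ e)

include hq

lemma QSupp.pow {f : R[X]} (hf : QSupp q f) : QSupp q (f ^ q) := by
  subst hq
  intro n h
  rw [coeff_pow_char_pow] at h
  split at h
  · obtain ⟨i, hi⟩ := hf _ fun h0 => h (by rw [h0, zero_pow (pow_ne_zero e hp.out.ne_zero)])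
    exact ⟨i + 1, by rw [pow_succ, ← hi, Nat.div_mul_cancel ‹_›]⟩
  · exact absurd rfl h

lemma QSupp.pow_pow {f : R[X]} (hf : QSupp q f) (j : ℕ) : QSupp q (f ^ q ^ j) := by
  induction j with
  | zero => simpa using hf
  | succ j ih => rw [pow_succ, pow_mul]; exact QSupp.pow p e hq ih

lemma QSupp.comp {f g : R[X]} (hf : QSupp q f) (hg : QSupp q g) : QSupp q (f.comp g) := by
  intro n h
  by_contra hn
  apply h
  rw [comp_eq_sum_left, Polynomial.sum, finset_sum_coeff]
  refine Finset.sum_eq_zero fun m hm => ?_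
  obtain ⟨i, rfl⟩ := hf m (mem_support_iff.mp hm)
  rw [coeff_C_mul]
  rcases eq_or_ne ((g ^ q ^ i).coeff n) 0 with h0 | h0
  · rw [h0, mul_zero]
  · exact absurd (QSupp.pow_pow p e hq hg i n h0) hn

end S

variable {k : Type*} [Field k] {q : ℕ}

lemma phi_zero (φ : Polynomial k → Polynomial (Polynomial k))
    (hφ_add : ∀ a b : Polynomial k, φ (a + b) = φ a + φ b) : φ 0 = 0 := by
  have := hφ_add 0 0
  simpa using this.symm

lemma phi_one (φ : Polynomial k → Polynomial (Polynomial k))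
    (hφ_C : ∀ c : k, φ (C c) = C (C c) * X) : φ 1 = X := by
  have := hφ_C 1
  simpa using this

lemma phi_X_coeff_zero (φ : Polynomial k → Polynomial (Polynomial k))
    (hφ_X : φ X = C (X : Polynomial k) * X + X ^ q) (hq1 : 1 < q) : (φ X).coeff 0 = 0 := by
  rw [hφ_X]
  simp only [coeff_add, coeff_C_mul, coeff_X_zero, mul_zero, coeff_X_pow, zero_add]
  rw [if_neg (by omega)]

lemma phi_X_coeff_one (φ : Polynomial k → Polynomial (Polynomial k))
    (hφ_X : φ X = C (X : Polynomial k) * X + X ^ q) (hq1 : 1 < q) : (φ X).coeff 1 = X := by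
  rw [hφ_X]
  simp only [coeff_add, coeff_C_mul, coeff_X_one, mul_one, coeff_X_pow]
  rw [if_neg (by omega), add_zero]

lemma phi_coeff_one (φ : Polynomial k → Polynomial (Polynomial k))
    (hφ_C : ∀ c : k, φ (C c) = C (C c) * X)
    (hφ_X : φ X = C (X : Polynomial k) * X + X ^ q)
    (hφ_add : ∀ a b : Polynomial k, φ (a + b) = φ a + φ b)
    (hφ_mul : ∀ a b : Polynomial k, φ (a * b) = (φ a).comp (φ b))
    (hq1 : 1 < q) (a : Polynomial k) : (φ a).coeff 1 = a := by
  induction a using Polynomial.induction_on with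
  | C c => rw [hφ_C]; simp
  | add p r hp hr => rw [hφ_add, coeff_add, hp, hr]
  | monomial n c ih =>
    have h : C c * X ^ (n + 1) = C c * X ^ n * X := by ring
    rw [h, hφ_mul, coeff_one_comp _ _ (phi_X_coeff_zero φ hφ_X hq1), ih,
      phi_X_coeff_one φ hφ_X hq1]

lemma phi_X_monic (φ : Polynomial k → Polynomial (Polynomial k))
    (hφ_X : φ X = C (X : Polynomial k) * X + X ^ q) (hq1 : 1 < q) :
    (φ X).Monic ∧ (φ X).natDegree = q := by
  have hdeg : degree (C (X : Polynomial k) * X) < ((q : ℕ) : WithBot ℕ) := by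
    refine lt_of_le_of_lt (degree_mul_le _ _) ?_
    refine lt_of_le_of_lt (add_le_add degree_C_le degree_X_le) ?_
    simpa using (Nat.one_lt_cast.mpr hq1 : (1 : WithBot ℕ) < q)
  have hdd : degree ((X : Polynomial (Polynomial k)) ^ q + C (X : Polynomial k) * X) = (q : ℕ) := by
    rw [degree_add_eq_left_of_degree_lt (by rwa [degree_X_pow]), degree_X_pow]
  constructor
  · rw [hφ_X, add_comm]
    exact monic_X_pow_add hdeg
  · rw [hφ_X, add_comm]
    exact natDegree_eq_of_degree_eq_some hdd

lemma phi_X_pow_monic (φ : Polynomial k → Polynomial (Polynomial k))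
    (hφ_C : ∀ c : k, φ (C c) = C (C c) * X)
    (hφ_X : φ X = C (X : Polynomial k) * X + X ^ q)
    (hφ_mul : ∀ a b : Polynomial k, φ (a * b) = (φ a).comp (φ b))
    (hq1 : 1 < q) (n : ℕ) : (φ (X ^ n)).Monic ∧ (φ (X ^ n)).natDegree = q ^ n := by
  induction n with
  | zero =>
    rw [pow_zero, phi_one φ hφ_C]
    exact ⟨monic_X, by simp⟩
  | succ n ih =>
    have h : (X : Polynomial k) ^ (n + 1) = X * X ^ n := by ring
    obtain ⟨hXm, hXd⟩ := phi_X_monic φ hφ_X hq1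
    rw [h, hφ_mul]
    constructor
    · exact hXm.comp ih.1 (by rw [ih.2]; positivity)
    · rw [natDegree_comp, hXd, ih.2, pow_succ, mul_comm]

lemma phi_monomial (φ : Polynomial k → Polynomial (Polynomial k))
    (hφ_C : ∀ c : k, φ (C c) = C (C c) * X)
    (hφ_mul : ∀ a b : Polynomial k, φ (a * b) = (φ a).comp (φ b))
    (i : ℕ) (c : k) : φ (monomial i c) = C (C c) * φ (X ^ i) := by
  rw [← C_mul_X_pow_eq_monomial, hφ_mul, hφ_C]
  simp [mul_comp]

lemma phi_natDegree_le (φ : Polynomial k → Polynomial (Polynomial k))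
    (hφ_C : ∀ c : k, φ (C c) = C (C c) * X)
    (hφ_X : φ X = C (X : Polynomial k) * X + X ^ q)
    (hφ_add : ∀ a b : Polynomial k, φ (a + b) = φ a + φ b)
    (hφ_mul : ∀ a b : Polynomial k, φ (a * b) = (φ a).comp (φ b))
    (hq1 : 1 < q) (a : Polynomial k) : (φ a).natDegree ≤ q ^ a.natDegree := by
  set n := a.natDegree with hn
  let φ' : Polynomial k →+ Polynomial (Polynomial k) := AddMonoidHom.mk' φ hφ_add
  have key : φ a = ∑ i ∈ Finset.range (n + 1), C (C (a.coeff i)) * φ (X ^ i) := by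
    calc φ a = φ' (∑ i ∈ Finset.range (n + 1), monomial i (a.coeff i)) := by
          rw [← as_sum_range' a _ (Nat.lt_succ_self _)]; rfl
      _ = ∑ i ∈ Finset.range (n + 1), φ (monomial i (a.coeff i)) := map_sum φ' _ _
      _ = _ := Finset.sum_congr rfl fun i _ => phi_monomial φ hφ_C hφ_mul i _
  rw [key]
  refine natDegree_sum_le_of_forall_le _ _ fun i hi => ?_
  refine le_trans (natDegree_C_mul_le _ _) ?_
  rw [(phi_X_pow_monic φ hφ_C hφ_X hφ_mul hq1 i).2]
  exact Nat.pow_le_pow_right (by omega) (Nat.lt_succ_iff.mp (Finset.mem_range.mp hi))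

lemma phi_monic (φ : Polynomial k → Polynomial (Polynomial k))
    (hφ_C : ∀ c : k, φ (C c) = C (C c) * X)
    (hφ_X : φ X = C (X : Polynomial k) * X + X ^ q)
    (hφ_add : ∀ a b : Polynomial k, φ (a + b) = φ a + φ b)
    (hφ_mul : ∀ a b : Polynomial k, φ (a * b) = (φ a).comp (φ b))
    (hq1 : 1 < q) {a : Polynomial k} (ha : a.Monic) (h0 : 0 < a.natDegree) :
    (φ a).Monic ∧ (φ a).natDegree = q ^ a.natDegree := by
  set d := a.natDegree with hd
  have hsplit : a = a.eraseLead + X ^ d := by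
    conv_lhs => rw [← eraseLead_add_C_mul_X_pow a]
    rw [ha.leadingCoeff, C_1, one_mul]
  obtain ⟨hm, hdeg⟩ := phi_X_pow_monic φ hφ_C hφ_X hφ_mul hq1 d
  have hlt : (φ a.eraseLead).degree < (φ (X ^ d)).degree := by
    rw [degree_eq_natDegree hm.ne_zero, hdeg]
    refine lt_of_le_of_lt degree_le_natDegree ?_
    rw [Nat.cast_lt]
    refine lt_of_le_of_lt (phi_natDegree_le φ hφ_C hφ_X hφ_add hφ_mul hq1 _) ?_
    refine lt_of_le_of_lt (Nat.pow_le_pow_right (by omega) (eraseLead_natDegree_le a)) ?_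
    exact Nat.pow_lt_pow_right hq1 (by omega)
  have hφa : φ a = φ a.eraseLead + φ (X ^ d) := by
    conv_lhs => rw [hsplit]
    rw [hφ_add]
  constructor
  · rw [hφa]; exact hm.add_of_right hlt
  · rw [hφa, natDegree_eq_of_degree_eq (degree_add_eq_right_of_degree_lt hlt), hdeg]

lemma phi_qsupp (φ : Polynomial k → Polynomial (Polynomial k))
    (hφ_C : ∀ c : k, φ (C c) = C (C c) * X)
    (hφ_X : φ X = C (X : Polynomial k) * X + X ^ q)
    (hφ_add : ∀ a b : Polynomial k, φ (a + b) = φ a + φ b)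
    (hφ_mul : ∀ a b : Polynomial k, φ (a * b) = (φ a).comp (φ b))
    (p e : ℕ) [Fact p.Prime] [CharP k p] (hqe : q = p ^ e)
    (a : Polynomial k) : QSupp q (φ a) := by
  have hX : QSupp q (φ X) := by
    intro m h
    rw [hφ_X, coeff_add, coeff_C_mul, coeff_X_pow] at h
    rcases eq_or_ne m 1 with rfl | hm1
    · exact ⟨0, by simp⟩
    · rcases eq_or_ne m q with rfl | hmq
      · exact ⟨1, by simp⟩
      · exact absurd (by rw [coeff_X_of_ne_one hm1, mul_zero, if_neg hmq, add_zero]) h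
  induction a using Polynomial.induction_on with
  | C c =>
    intro n h
    rw [hφ_C, coeff_C_mul] at h
    have hX' : (X : Polynomial (Polynomial k)).coeff n ≠ 0 := fun h0 => h (by rw [h0, mul_zero])
    rcases eq_or_ne n 1 with rfl | hn1
    · exact ⟨0, by simp⟩
    · exact absurd (coeff_X_of_ne_one hn1) hX'
  | add r s hr hs =>
    intro n h
    rw [hφ_add, coeff_add] at h
    rcases eq_or_ne ((φ r).coeff n) 0 with h1 | h1
    · exact hs n (by rwa [h1, zero_add] at h)
    · exact hr n h1
  | monomial n c ih =>
    have h : C c * X ^ (n + 1) = C c * X ^ n * X := by ring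
    rw [h, hφ_mul]
    exact QSupp.comp p e hqe ih hX

end Helpers

/-- Let `k` be a finite field of `q` elements, `A = k[T]`, `φ` the Carlitz module
(realized as a family of polynomials `φ a ∈ A[x]` with the defining properties),
and `𝔭 = (P) ⊂ A` a maximal ideal generated by a monic irreducible `P` of degree `d`.
Then `φ_P(x)/x` has degree `q^d - 1`, its constant term is `P`, and all its
non-leading coefficients lie in `𝔭` (Eisenstein at `𝔭` up to the leading coefficient). -/
theorem stmt3 (k : Type*) [Field k] [Fintype k] (q : ℕ) (hq : Fintype.card k = q)
    (φ : Polynomial k → Polynomial (Polynomial k))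
    (hφ_C : ∀ c : k, φ (C c) = C (C c) * X)
    (hφ_X : φ X = C (X : Polynomial k) * X + X ^ q)
    (hφ_add : ∀ a b : Polynomial k, φ (a + b) = φ a + φ b)
    (hφ_mul : ∀ a b : Polynomial k, φ (a * b) = (φ a).comp (φ b))
    (P : Polynomial k) (hP : Irreducible P) (hPm : P.Monic)
    (d : ℕ) (hd : P.natDegree = d) :
    ∃ g : Polynomial (Polynomial k), φ P = X * g ∧
      g.natDegree = q ^ d - 1 ∧
      g.coeff 0 = P ∧
      ∀ i < g.natDegree, g.coeff i ∈ Ideal.span ({P} : Set (Polynomial k)) := by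
  have hq1 : 1 < q := hq ▸ Fintype.one_lt_card
  obtain ⟨p, hcp⟩ := CharP.exists k
  haveI := hcp
  haveI hpp : Fact p.Prime := ⟨CharP.char_is_prime k p⟩
  obtain ⟨e, -, hqe⟩ := FiniteField.card k p
  have hqe' : q = p ^ (e : ℕ) := by rw [← hq, hqe]
  have hd1 : 0 < d := hd ▸ hP.natDegree_pos
  obtain ⟨hmon, hdeg⟩ := phi_monic φ hφ_C hφ_X hφ_add hφ_mul hq1 hPm (hd ▸ hd1)
  rw [hd] at hdeg
  have hsupp : QSupp q (φ P) := phi_qsupp φ hφ_C hφ_X hφ_add hφ_mul p e hqe' P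
  have hc1 : (φ P).coeff 1 = P := phi_coeff_one φ hφ_C hφ_X hφ_add hφ_mul hq1 P
  have hqd1 : 1 ≤ q ^ d := Nat.one_le_pow _ _ (by omega)
  have hc0 : (φ P).coeff 0 = 0 := by
    by_contra h
    obtain ⟨i, hi⟩ := hsupp 0 h
    have := Nat.one_le_pow i q (by omega)
    omega
  obtain ⟨g, hg⟩ := X_dvd_iff.mpr hc0
  haveI := Fact.mk hP
  set F := AdjoinRoot P with hF
  let mk : Polynomial k →+* F := AdjoinRoot.mk P
  haveI : CharP F p := charP_of_injective_algebraMap (algebraMap k F).injective p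
  let pb := AdjoinRoot.powerBasis (f := P) (hPm.ne_zero)
  haveI : Fintype F := Module.fintypeOfFintype pb.basis
  have hcardF : Fintype.card F = q ^ d := by
    rw [Module.card_fintype pb.basis, hq, Fintype.card_fin]
    show q ^ P.natDegree = q ^ d
    rw [hd]
  set t := AdjoinRoot.root P with ht
  set ψ := (φ P).map mk with hψ
  have hψmon : ψ.Monic := hmon.map mk
  have hψdeg : ψ.natDegree = q ^ d := by
    rw [hψ, hmon.natDegree_map, hdeg]
  set b : ℕ → F := fun i => ψ.coeff (q ^ i) with hb
  have hb0 : b 0 = 0 := by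
    rw [hb]
    simp only [pow_zero, hψ, coeff_map, hc1]
    exact AdjoinRoot.mk_self
  have hbd : b d = 1 := by
    rw [hb]
    show ψ.coeff (q ^ d) = 1
    rw [← hψdeg]
    exact hψmon.coeff_natDegree
  have hψsupp : ∀ n, ψ.coeff n ≠ 0 → ∃ i, n = q ^ i := by
    intro n h
    refine hsupp n fun h0 => h ?_
    rw [hψ, coeff_map, h0, map_zero]
  have hqinj : ∀ i j : ℕ, q ^ i = q ^ j → i = j :=
    fun i j h => Nat.pow_right_injective hq1 h
  have hA : ψ = ∑ i ∈ Finset.range (d + 1), C (b i) * X ^ (q ^ i) := by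
    ext n
    rw [finset_sum_coeff]
    simp only [coeff_C_mul, coeff_X_pow]
    by_cases hn : ∃ i, n = q ^ i
    · obtain ⟨i, rfl⟩ := hn
      by_cases hid : i ≤ d
      · rw [Finset.sum_eq_single i]
        · rw [if_pos rfl, mul_one]
        · intro j hj hji
          rw [if_neg (fun hh => hji (hqinj i j hh).symm), mul_zero]
        · intro hmem
          exact absurd (Finset.mem_range.mpr (by omega)) hmem
      · rw [coeff_eq_zero_of_natDegree_lt
            (by rw [hψdeg]; exact Nat.pow_lt_pow_right hq1 (by omega)),
          Finset.sum_eq_zero]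
        intro j hj
        rw [if_neg, mul_zero]
        intro hh
        have := hqinj i j hh
        have := Finset.mem_range.mp hj
        omega
    · rw [Finset.sum_eq_zero fun j hj => by
        rw [if_neg (fun hh => hn ⟨j, hh⟩), mul_zero]]
      by_contra h
      exact hn (hψsupp n h)
  set χ := (φ X).map mk with hχdef
  have hχ : χ = C t * X + X ^ q := by
    rw [hχdef, hφ_X, Polynomial.map_add, Polynomial.map_mul, Polynomial.map_pow, map_C, map_X]
    rw [AdjoinRoot.mk_X]
  have hcomm : χ.comp ψ = ψ.comp χ := by
    rw [hχdef, hψ, ← Polynomial.map_comp, ← Polynomial.map_comp, ← hφ_mul, ← hφ_mul, mul_comm]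
  have hrec : ∀ j, 1 ≤ j → j ≤ d →
      t * b j + (b (j - 1)) ^ q = t ^ q ^ j * b j + b (j - 1) := by
    intro j h1 h2
    have hL : (χ.comp ψ).coeff (q ^ j) = t * b j + (b (j - 1)) ^ q := by
      rw [hχ, add_comp, mul_comp, C_comp, X_comp, pow_comp, X_comp, coeff_add, coeff_C_mul]
      congr 1
      have hq0 : 0 < q := by omega
      have hqq : ψ ^ q = ψ ^ p ^ (e : ℕ) := by rw [hqe']
      rw [hqq, coeff_pow_char_pow, if_pos (by rw [← hqe']; exact dvd_pow_self q (by omega))]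
      rw [← hqe']
      have hdiv : q ^ j / q = q ^ (j - 1) := by
        have hpow : q ^ j = q * q ^ (j - 1) := by
          rw [← pow_succ']
          congr 1
          omega
        rw [hpow, Nat.mul_div_cancel_left _ hq0]
      rw [hdiv]
    have hχpow : ∀ i : ℕ, χ ^ q ^ i = C (t ^ q ^ i) * X ^ q ^ i + X ^ q ^ (i + 1) := by
      intro i
      have hqi : q ^ i = p ^ ((e : ℕ) * i) := by rw [pow_mul, ← hqe']
      rw [hχ, hqi, add_pow_char_pow, ← hqi, mul_pow, ← C_pow, ← pow_mul, ← pow_succ']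
    have hR : (ψ.comp χ).coeff (q ^ j) = t ^ q ^ j * b j + b (j - 1) := by
      conv_lhs => rw [hA]
      rw [sum_comp]
      have hterm : ∀ i ∈ Finset.range (d + 1),
          (C (b i) * X ^ q ^ i).comp χ
            = C (b i) * (C (t ^ q ^ i) * X ^ q ^ i) + C (b i) * X ^ q ^ (i + 1) := by
        intro i _
        rw [mul_comp, C_comp, pow_comp, X_comp, hχpow i, mul_add]
      rw [Finset.sum_congr rfl hterm, Finset.sum_add_distrib, coeff_add, finset_sum_coeff,
        finset_sum_coeff]
      congr 1
      · rw [Finset.sum_eq_single j]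
        · simp only [coeff_C_mul, coeff_X_pow, eq_self_iff_true, if_true, mul_one]
          ring
        · intro i hi hij
          simp only [coeff_C_mul, coeff_X_pow]
          rw [if_neg (fun hh => hij (hqinj _ _ hh).symm), mul_zero, mul_zero]
        · intro hmem
          exact absurd (Finset.mem_range.mpr (by omega)) hmem
      · rw [Finset.sum_eq_single (j - 1)]
        · simp only [coeff_C_mul, coeff_X_pow]
          rw [if_pos (by congr 1; omega), mul_one]
        · intro i hi hij
          simp only [coeff_C_mul, coeff_X_pow]
          rw [if_neg (fun hh => hij (by have := hqinj _ _ hh; omega)), mul_zero]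
        · intro hmem
          exact absurd (Finset.mem_range.mpr (by omega)) hmem
    calc t * b j + (b (j - 1)) ^ q = (χ.comp ψ).coeff (q ^ j) := hL.symm
      _ = (ψ.comp χ).coeff (q ^ j) := by rw [hcomm]
      _ = t ^ q ^ j * b j + b (j - 1) := hR
  have hfrob : ∀ m, 1 ≤ m → m < d → t ^ q ^ m ≠ t := by
    intro m h1 h2 htm
    have hfr : ∀ x : F, iterateFrobenius F p ((e : ℕ) * m) x = x ^ q ^ m := by
      intro x
      rw [iterateFrobenius_def, hqe', ← pow_mul]
    have key : ∀ x : F, x ^ q ^ m = x := by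
      let gal : F →ₐ[k] F :=
        { toRingHom := iterateFrobenius F p ((e : ℕ) * m)
          commutes' := fun c => by
            show iterateFrobenius F p ((e : ℕ) * m) (algebraMap k F c) = algebraMap k F c
            rw [hfr, ← map_pow]
            congr 1
            rw [← hq]
            exact FiniteField.pow_card_pow m c }
      have hgal : gal = AlgHom.id k F := by
        refine AdjoinRoot.algHom_ext ?_
        show iterateFrobenius F p ((e : ℕ) * m) (AdjoinRoot.root P) = AdjoinRoot.root P
        rw [hfr]
        exact htm
      intro x
      calc x ^ q ^ m = iterateFrobenius F p ((e : ℕ) * m) x := (hfr x).symm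
        _ = gal x := rfl
        _ = x := by rw [hgal]; rfl
    have hu : ∀ u : Fˣ, u ^ (q ^ m - 1) = 1 := by
      intro u
      have hx : u ^ q ^ m = u := by
        ext
        rw [Units.val_pow_eq_pow_val]
        exact key u.val
      have h3 : u ^ (q ^ m - 1) * u = u := by
        rw [← pow_succ]
        have he : q ^ m - 1 + 1 = q ^ m := by
          have := Nat.one_le_pow m q (by omega)
          omega
        rw [he]
        exact hx
      exact mul_right_cancel (h3.trans (one_mul u).symm)
    have hdvd := (FiniteField.forall_pow_eq_one_iff (K := F) (q ^ m - 1)).mp hu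
    rw [hcardF] at hdvd
    have h4 : q ^ m < q ^ d := Nat.pow_lt_pow_right hq1 h2
    have h5 : q ≤ q ^ m := Nat.le_self_pow (by omega) q
    have h6 := Nat.le_of_dvd (by omega) hdvd
    omega
  have hbz : ∀ j, j < d → b j = 0 := by
    intro j
    induction j with
    | zero => intro _; exact hb0
    | succ j ih =>
      intro hlt
      have hbj : b j = 0 := ih (by omega)
      have hr := hrec (j + 1) (by omega) (by omega)
      simp only [Nat.add_sub_cancel] at hr
      rw [hbj, zero_pow (by omega : q ≠ 0), add_zero, add_zero] at hr
      by_contra hne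
      exact hfrob (j + 1) (by omega) (by omega) (mul_right_cancel₀ hne hr.symm)
  have hψX : ψ = X ^ q ^ d := by
    rw [hA, Finset.sum_eq_single d]
    · rw [hbd, C_1, one_mul]
    · intro i hi hid
      rw [hbz i (by have := Finset.mem_range.mp hi; omega), C_0, zero_mul]
    · intro hmem
      exact absurd (Finset.mem_range.mpr (by omega)) hmem
  have hker : ∀ n, n ≠ q ^ d → mk ((φ P).coeff n) = 0 := by
    intro n hn
    have h0 : ψ.coeff n = 0 := by rw [hψX, coeff_X_pow, if_neg hn]
    rwa [hψ, coeff_map] at h0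
  have hgne : g ≠ 0 := by
    intro h0
    rw [h0, mul_zero] at hg
    exact hmon.ne_zero hg
  have hgdeg : g.natDegree = q ^ d - 1 := by
    have h1 : (φ P).natDegree = 1 + g.natDegree := by
      rw [hg, natDegree_mul X_ne_zero hgne, natDegree_X]
    omega
  refine ⟨g, hg, hgdeg, ?_, ?_⟩
  · have h1 : (X * g).coeff (0 + 1) = g.coeff 0 := coeff_X_mul g 0
    rw [← hg] at h1
    rw [← h1]
    exact hc1
  · intro i hi
    rw [Ideal.mem_span_singleton, ← AdjoinRoot.mk_eq_zero]
    have hne : i + 1 ≠ q ^ d := by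
      rw [hgdeg] at hi
      omega
    have h2 := hker (i + 1) hne
    rwa [hg, coeff_X_mul] at h2
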